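/- Let R be a discrete valuation ring with uniformizer π and 2 invertible in R. Suppose F(x) = f_6 x^6 + f_5 x^5 + ... + f_1 x + f_0 ∈ R[x], and a_0, a_1, b_0, b_1 ∈ R are such that x² + a_1 x + a_0 divides F(x) - (b_1 x + b_0)² in R[x]. If π divides f_0, f_1, and a_0, but π² does not divide f_0, then π divides a_1 and b_0, and π does not divide f_2 - b_1². -/

import Mathlib

open Polynomial in
theorem stmt_9 {R : Type*} [CommRing R] [IsDomain R] [IsDiscreteValuationRing R]
    (π : R) (hπ : Irreducible π) (h2 : IsUnit (2 : R))
    (f0 f1 f2 f3 f4 f5 f6 a0 a1 b0 b1 : R)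
    (hdiv : (X ^ 2 + C a1 * X + C a0) ∣
      ((C f6 * X ^ 6 + C f5 * X ^ 5 + C f4 * X ^ 4 + C f3 * X ^ 3 + C f2 * X ^ 2
          + C f1 * X + C f0) - (C b1 * X + C b0) ^ 2))
    (h0 : π ∣ f0) (h1 : π ∣ f1) (ha0 : π ∣ a0) (h0' : ¬ π ^ 2 ∣ f0) :
    π ∣ a1 ∧ π ∣ b0 ∧ ¬ π ∣ (f2 - b1 ^ 2) := by
  have hp : Prime π := hπ.prime
  obtain ⟨Q, hQ⟩ := hdiv
  set c0 := Q.coeff 0 with hc0def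
  set c1 := Q.coeff 1 with hc1def
  set c2 := Q.coeff 2 with hc2def
  have e0 : f0 - b0 ^ 2 = a0 * c0 := by
    have := congrArg (fun p => p.coeff 0) hQ
    simp only [coeff_sub, coeff_add, coeff_mul, Finset.Nat.sum_antidiagonal_eq_sum_range_succ_mk,
      Finset.sum_range_succ, Finset.sum_range_zero, coeff_C_mul, coeff_X_pow, coeff_C, coeff_X,
      pow_two] at this
    simp at this
    linear_combination this
  have e1 : f1 - 2 * b0 * b1 = a0 * c1 + a1 * c0 := by
    have := congrArg (fun p => p.coeff 1) hQ
    simp only [coeff_sub, coeff_add, coeff_mul, Finset.Nat.sum_antidiagonal_eq_sum_range_succ_mk,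
      Finset.sum_range_succ, Finset.sum_range_zero, coeff_C_mul, coeff_X_pow, coeff_C, coeff_X,
      coeff_add, pow_two] at this
    simp at this
    linear_combination this
  have e2 : f2 - b1 ^ 2 = a0 * c2 + a1 * c1 + c0 := by
    have := congrArg (fun p => p.coeff 2) hQ
    simp only [coeff_sub, coeff_add, coeff_mul, Finset.Nat.sum_antidiagonal_eq_sum_range_succ_mk,
      Finset.sum_range_succ, Finset.sum_range_zero, coeff_C_mul, coeff_X_pow, coeff_C, coeff_X,
      coeff_add, pow_two] at this
    simp at this
    linear_combination this
  have hb0 : π ∣ b0 := by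
    have hsq : π ∣ b0 ^ 2 := by
      have : b0 ^ 2 = f0 - a0 * c0 := by linear_combination -e0
      rw [this]
      exact dvd_sub h0 (ha0.mul_right _)
    exact hp.dvd_of_dvd_pow hsq
  have hc0 : ¬ π ∣ c0 := by
    intro hc
    apply h0'
    have : f0 = b0 ^ 2 + a0 * c0 := by linear_combination e0
    rw [this]
    exact dvd_add (pow_dvd_pow_of_dvd hb0 2) (by rw [pow_two]; exact mul_dvd_mul ha0 hc)
  have ha1 : π ∣ a1 := by
    have : π ∣ a1 * c0 := by
      have h : a1 * c0 = f1 - 2 * b0 * b1 - a0 * c1 := by linear_combination -e1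
      rw [h]
      exact dvd_sub (dvd_sub h1 (by exact (hb0.mul_left 2).mul_right b1)) (ha0.mul_right _)
    rcases hp.dvd_mul.mp this with h | h
    · exact h
    · exact absurd h hc0
  refine ⟨ha1, hb0, ?_⟩
  intro hd
  apply hc0
  have : c0 = (f2 - b1 ^ 2) - a0 * c2 - a1 * c1 := by linear_combination -e2
  rw [this]
  exact dvd_sub (dvd_sub hd (ha0.mul_right _)) (ha1.mul_right _)
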